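/- Marginal KL bound: for every step t with 1 ≤ t ≤ T, D_KL(d_t^{π_roll} ‖ d_t^{π_θ}) ≤ (t−1) · D_KL^{tok,max}, where D_KL^{tok,max} = max over steps t and contexts c of D_KL(π_roll(·|c) ‖ π_θ(·|c)) and D_KL(p‖q) = Σ_v p(v) log(p(v)/q(v)). -/
import Mathlib


open Finset

section Setup

variable {X V : Type*}

/-- A policy assigns to each context `(x, y_{<t})` (a prompt together with a token
prefix of length `t`) a strictly positive probability distribution on the next token. -/
structure Policy (X V : Type*) [Fintype V] where
  prob : ∀ t : ℕ, X × (Fin t → V) → V → ℝ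
  pos : ∀ t c v, 0 < prob t c v
  sum_one : ∀ t c, ∑ v, prob t c v = 1

variable [Fintype X] [Fintype V]

/-- Trajectory probability `P^π(y | x) = ∏_t π(y_t | x, y_{<t})`. -/
noncomputable def traj (π : Policy X V) (T : ℕ) (x : X) (y : Fin T → V) : ℝ :=
  ∏ t : Fin T, π.prob t.1 (x, fun s : Fin t.1 => y (Fin.castLE t.isLt.le s)) (y t)

/-- Context visitation mass at prefix length `k`: this is the paper's `d_{k+1}^π`,
a distribution on pairs (prompt, prefix of `k` tokens). -/
noncomputable def visit (π : Policy X V) (P : X → ℝ) (k : ℕ) (c : X × (Fin k → V)) : ℝ :=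
  P c.1 * ∏ s : Fin k, π.prob s.1 (c.1, fun u : Fin s.1 => c.2 (Fin.castLE s.isLt.le u)) (c.2 s)

/-- Total variation distance `½ ∑ |p - q|`. -/
noncomputable def tvDist {α : Type*} [Fintype α] (p q : α → ℝ) : ℝ :=
  (∑ a, |p a - q a|) / 2

/-- KL divergence `∑ p log (p/q)`. -/
noncomputable def klDiv {α : Type*} [Fintype α] (p q : α → ℝ) : ℝ :=
  ∑ a, p a * Real.log (p a / q a)

/-- The objective `J(π) = E_{x∼P} E_{y∼P^π(·|x)}[R(x,y)]`. -/
noncomputable def Jval (P : X → ℝ) (T : ℕ) (R : X → (Fin T → V) → ℝ) (π : Policy X V) : ℝ :=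
  ∑ x, P x * ∑ y : Fin T → V, traj π T x y * R x y

/-- `Q^π(c, v)`: conditional expectation of the reward under continuation by `π`,
given context `c` (of length `k`) and next token `v`. -/
noncomputable def Qval (T : ℕ) (R : X → (Fin T → V) → ℝ) (π : Policy X V)
    (k : ℕ) (hk : k < T) (c : X × (Fin k → V)) (v : V) : ℝ := by
  classical
  exact ∑ y : Fin T → V,
    if (∀ s : Fin k, y (Fin.castLE hk.le s) = c.2 s) ∧ y ⟨k, hk⟩ = v then
      (∏ s : Fin T, if k < s.1 then
          π.prob s.1 (c.1, fun u : Fin s.1 => y (Fin.castLE s.isLt.le u)) (y s)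
        else 1) * R c.1 y
    else 0

/-- `V^π(c) = E_{v ∼ π(·|c)}[Q^π(c, v)]`. -/
noncomputable def Vval (T : ℕ) (R : X → (Fin T → V) → ℝ) (π : Policy X V)
    (k : ℕ) (hk : k < T) (c : X × (Fin k → V)) : ℝ :=
  ∑ v, π.prob k c v * Qval T R π k hk c v

/-- Per-step advantage `A_t(c, v) = Q^{π_roll}(c,v) - V^{π_roll}(c)`. -/
noncomputable def Aval (T : ℕ) (R : X → (Fin T → V) → ℝ) (πroll : Policy X V)
    (k : ℕ) (hk : k < T) (c : X × (Fin k → V)) (v : V) : ℝ :=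
  Qval T R πroll k hk c v - Vval T R πroll k hk c

/-- `g_t(c) = E_{v ∼ π_θ(·|c)}[A_t(c, v)]`. -/
noncomputable def gval (T : ℕ) (R : X → (Fin T → V) → ℝ) (πroll πθ : Policy X V)
    (k : ℕ) (hk : k < T) (c : X × (Fin k → V)) : ℝ :=
  ∑ v, πθ.prob k c v * Aval T R πroll k hk c v

/-- Surrogate objective `L = ∑_{t=1}^T E_{c ∼ d_t^{π_roll}}[g_t(c)]`. -/
noncomputable def surrogate (P : X → ℝ) (T : ℕ) (R : X → (Fin T → V) → ℝ)
    (πroll πθ : Policy X V) : ℝ :=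
  ∑ k : Fin T, ∑ c : X × (Fin k.1 → V), visit πroll P k.1 c * gval T R πroll πθ k.1 k.isLt c

/-- Approximation error `Error = J(π_θ) - J(π_roll) - L`. -/
noncomputable def errVal (P : X → ℝ) (T : ℕ) (R : X → (Fin T → V) → ℝ)
    (πroll πθ : Policy X V) : ℝ :=
  Jval P T R πθ - Jval P T R πroll - surrogate P T R πroll πθ

/-- Sequence-level KL divergence `D_KL^seq = E_{x∼P}[D_KL(P^{π_roll}(·|x) ‖ P^{π_θ}(·|x))]`. -/
noncomputable def seqKL (P : X → ℝ) (T : ℕ) (πroll πθ : Policy X V) : ℝ :=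
  ∑ x, P x * klDiv (fun y : Fin T → V => traj πroll T x y) (fun y => traj πθ T x y)

end Setup


section Aux

variable {X V : Type*} [Fintype X] [Fintype V]

/-- The snoc equivalence on contexts. -/
def ctxEquiv (X V : Type*) (k : ℕ) : (X × (Fin (k + 1) → V)) ≃ ((X × (Fin k → V)) × V) where
  toFun c := ((c.1, Fin.init c.2), c.2 (Fin.last k))
  invFun d := (d.1.1, Fin.snoc d.1.2 d.2)
  left_inv c := by simp
  right_inv d := by simp

lemma visit_succ (π : Policy X V) (P : X → ℝ) (k : ℕ) (c : X × (Fin (k + 1) → V)) :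
    visit π P (k + 1) c
      = visit π P k (c.1, Fin.init c.2)
        * π.prob k (c.1, Fin.init c.2) (c.2 (Fin.last k)) := by
  obtain ⟨x, y⟩ := c
  unfold visit
  rw [Fin.prod_univ_castSucc, ← mul_assoc]
  rfl

lemma visit_nonneg (π : Policy X V) (P : X → ℝ) (hP0 : ∀ x, 0 ≤ P x) (k : ℕ)
    (c : X × (Fin k → V)) : 0 ≤ visit π P k c := by
  unfold visit
  exact mul_nonneg (hP0 c.1) (Finset.prod_nonneg fun s _ => (π.pos _ _ _).le)

lemma visit_pos_of (π : Policy X V) (P : X → ℝ) (k : ℕ)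
    (c : X × (Fin k → V)) (h : 0 < P c.1) : 0 < visit π P k c := by
  unfold visit
  exact mul_pos h (Finset.prod_pos fun s _ => π.pos _ _ _)

lemma visit_eq_zero (π : Policy X V) (P : X → ℝ) (k : ℕ)
    (c : X × (Fin k → V)) (h : P c.1 = 0) : visit π P k c = 0 := by
  unfold visit; rw [h, zero_mul]

lemma visit_sum_one (π : Policy X V) (P : X → ℝ) (hP1 : ∑ x, P x = 1) (k : ℕ) :
    ∑ c : X × (Fin k → V), visit π P k c = 1 := by
  induction k with
  | zero =>
      rw [← hP1]
      rw [Fintype.sum_prod_type]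
      apply Finset.sum_congr rfl
      intro x _
      simp [visit]
  | succ k ih =>
      rw [Fintype.sum_equiv (ctxEquiv X V k)
        (fun c => visit π P (k+1) c)
        (fun d => visit π P k d.1 * π.prob k d.1 d.2)
        (fun c => visit_succ π P k c)]
      rw [Fintype.sum_prod_type]
      rw [← ih]
      apply Finset.sum_congr rfl
      intro c _
      dsimp only
      rw [← Finset.mul_sum, π.sum_one, mul_one]

lemma kl_chain {A B : Type*} [Fintype A] [Fintype B] (p q : A → ℝ) (f g : A → B → ℝ)
    (hp : ∀ a, 0 ≤ p a) (hq : ∀ a, 0 < p a → 0 < q a)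
    (hf : ∀ a b, 0 < f a b) (hg : ∀ a b, 0 < g a b)
    (hf1 : ∀ a, ∑ b, f a b = 1) :
    klDiv (fun ab : A × B => p ab.1 * f ab.1 ab.2) (fun ab => q ab.1 * g ab.1 ab.2)
      = klDiv p q + ∑ a, p a * klDiv (f a) (g a) := by
  unfold klDiv
  rw [Fintype.sum_prod_type, ← Finset.sum_add_distrib]
  apply Finset.sum_congr rfl
  intro a _
  rcases eq_or_lt_of_le (hp a) with h0 | hpos
  · simp [← h0]
  · have hqa := hq a hpos
    have key : ∀ b : B, p a * f a b * Real.log (p a * f a b / (q a * g a b))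
        = p a * Real.log (p a / q a) * f a b + p a * (f a b * Real.log (f a b / g a b)) := by
      intro b
      have h1 : p a * f a b / (q a * g a b) = (p a / q a) * (f a b / g a b) :=
        (div_mul_div_comm _ _ _ _).symm
      rw [h1, Real.log_mul (div_pos hpos hqa).ne' (div_pos (hf a b) (hg a b)).ne']
      ring
    calc ∑ b, p a * f a b * Real.log (p a * f a b / (q a * g a b))
        = ∑ b, (p a * Real.log (p a / q a) * f a b
            + p a * (f a b * Real.log (f a b / g a b))) :=
          Finset.sum_congr rfl fun b _ => key b
      _ = p a * Real.log (p a / q a) * (∑ b, f a b)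
            + p a * ∑ b, f a b * Real.log (f a b / g a b) := by
          rw [Finset.sum_add_distrib, ← Finset.mul_sum, ← Finset.mul_sum]
      _ = p a * Real.log (p a / q a) + p a * ∑ b, f a b * Real.log (f a b / g a b) := by
          rw [hf1 a, mul_one]

lemma kl_visit_succ (P : X → ℝ) (hP0 : ∀ x, 0 ≤ P x)
    (πroll πθ : Policy X V) (k : ℕ) :
    klDiv (visit πroll P (k + 1)) (visit πθ P (k + 1))
      = klDiv (visit πroll P k) (visit πθ P k)
        + ∑ c : X × (Fin k → V),
            visit πroll P k c * klDiv (πroll.prob k c) (πθ.prob k c) := by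
  have h1 : klDiv (visit πroll P (k + 1)) (visit πθ P (k + 1))
      = klDiv (fun d : (X × (Fin k → V)) × V => visit πroll P k d.1 * πroll.prob k d.1 d.2)
          (fun d => visit πθ P k d.1 * πθ.prob k d.1 d.2) := by
    unfold klDiv
    exact Fintype.sum_equiv (ctxEquiv X V k) _ _ (fun c => by
      rw [visit_succ, visit_succ]; rfl)
  rw [h1]
  apply kl_chain
  · exact visit_nonneg πroll P hP0 k
  · intro c hc
    apply visit_pos_of
    rcases eq_or_lt_of_le (hP0 c.1) with h | h
    · exact absurd (visit_eq_zero πroll P k c h.symm) (ne_of_gt hc)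
    · exact h
  · exact fun c v => πroll.pos _ _ _
  · exact fun c v => πθ.pos _ _ _
  · exact fun c => πroll.sum_one _ _

end Aux

/-- **Marginal KL bound**: for every `1 ≤ t ≤ T`,
`D_KL(d_t^{π_roll} ‖ d_t^{π_θ}) ≤ (t−1) · D_KL^tok,max`.
Here `Dkl` is (an upper bound on, in particular the maximum of) the token-level KL
divergences `D_KL(π_roll(·|c) ‖ π_θ(·|c))` over all steps and contexts, and
`d_t^π = visit π P (t−1)`. -/


theorem marginal_kl_bound
    {X V : Type*} [Fintype X] [Fintype V]
    (T : ℕ) (hT : 1 ≤ T)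
    (P : X → ℝ) (hP0 : ∀ x, 0 ≤ P x) (hP1 : ∑ x, P x = 1)
    (πroll πθ : Policy X V)
    (Dkl : ℝ)
    (hD : ∀ k : ℕ, k < T → ∀ c : X × (Fin k → V),
      klDiv (πroll.prob k c) (πθ.prob k c) ≤ Dkl)
    (t : ℕ) (ht1 : 1 ≤ t) (ht2 : t ≤ T) :
    klDiv (visit πroll P (t - 1)) (visit πθ P (t - 1)) ≤ ((t : ℝ) - 1) * Dkl := by
  have main : ∀ k : ℕ, k < T →
      klDiv (visit πroll P k) (visit πθ P k) ≤ (k : ℝ) * Dkl := by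
    intro k
    induction k with
    | zero =>
        intro _
        have h0 : klDiv (visit πroll P 0) (visit πθ P 0) = 0 := by
          unfold klDiv
          apply Finset.sum_eq_zero
          intro c _
          have he : visit πθ P 0 c = visit πroll P 0 c := by unfold visit; simp
          rw [he]
          rcases eq_or_lt_of_le (visit_nonneg πroll P hP0 0 c) with h | h
          · rw [← h]; simp
          · rw [div_self (ne_of_gt h), Real.log_one, mul_zero]
        simp [h0]
    | succ k ih =>
        intro hk
        have hk' : k < T := lt_of_le_of_lt (Nat.le_succ k) hk
        rw [kl_visit_succ P hP0 πroll πθ k]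
        have h2 : ∑ c : X × (Fin k → V),
            visit πroll P k c * klDiv (πroll.prob k c) (πθ.prob k c) ≤ Dkl := by
          calc ∑ c : X × (Fin k → V),
              visit πroll P k c * klDiv (πroll.prob k c) (πθ.prob k c)
              ≤ ∑ c : X × (Fin k → V), visit πroll P k c * Dkl :=
                Finset.sum_le_sum fun c _ =>
                  mul_le_mul_of_nonneg_left (hD k hk' c) (visit_nonneg πroll P hP0 k c)
            _ = Dkl := by
                rw [← Finset.sum_mul, visit_sum_one πroll P hP1 k, one_mul]
        have h3 := ih hk'
        push_cast
        linarith
  have ht3 : t - 1 < T := lt_of_lt_of_le (Nat.sub_lt ht1 one_pos) ht2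
  have := main (t - 1) ht3
  rwa [Nat.cast_sub ht1, Nat.cast_one] at this
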